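/- With the Kreweras triangle (h_{n,k}) defined by h_{1,1} = 1, h_{n,1} = sum_{i=1}^{n-1} h_{n-1,i}, h_{n,2} = 2h_{n,1} - h_{n-1,1}, and h_{n,k} = 2h_{n,k-1} - h_{n,k-2} - h_{n-1,k-1} - h_{n-1,k-2} for 3 ≤ k ≤ n, and with the convention h_{n,0} = 0, one has for all n ≥ 2 and all 1 ≤ k ≤ n: h_{n,k} - h_{n,k-1} = sum_{i=k}^{n-1} h_{n-1,i} - sum_{i=1}^{k-2} h_{n-1,i}. -/

import Mathlib

lemma sum_Icc_split_bot (f : ℕ → ℤ) (a m : ℕ) (hm : a ≤ m) :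
    ∑ i ∈ Finset.Icc a m, f i = f a + ∑ i ∈ Finset.Icc (a + 1) m, f i := by
  have : insert a (Finset.Icc (a + 1) m) = Finset.Icc a m := by
    rw [Finset.Icc_add_one_left_eq_Ioc, Finset.Ioc_insert_left hm]
  rw [← this, Finset.sum_insert (by simp)]

theorem kreweras_difference (h : ℕ → ℕ → ℤ)
    (h11 : h 1 1 = 1)
    (h0 : ∀ n, h n 0 = 0)
    (hrec1 : ∀ n, 2 ≤ n → h n 1 = ∑ i ∈ Finset.Icc 1 (n - 1), h (n - 1) i)
    (hrec2 : ∀ n, 2 ≤ n → h n 2 = 2 * h n 1 - h (n - 1) 1)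
    (hreck : ∀ n k, 3 ≤ k → k ≤ n →
      h n k = 2 * h n (k - 1) - h n (k - 2) - h (n - 1) (k - 1) - h (n - 1) (k - 2)) :
    ∀ n k, 2 ≤ n → 1 ≤ k → k ≤ n →
      h n k - h n (k - 1) =
        ∑ i ∈ Finset.Icc k (n - 1), h (n - 1) i - ∑ i ∈ Finset.Icc 1 (k - 2), h (n - 1) i := by
  intro n k hn
  induction k using Nat.strong_induction_on with
  | _ k ih =>
    intro hk hkn
    match k, hk with
    | 1, _ =>
      simp only [Nat.sub_self, h0]
      rw [hrec1 n hn]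
      simp
    | 2, _ =>
      rw [hrec2 n hn, hrec1 n hn]
      have h1 : 1 ≤ n - 1 := by omega
      rw [sum_Icc_split_bot (h (n-1)) 1 (n-1) h1]
      simp
      ring
    | (m + 3), _ =>
      have h3 : (3 : ℕ) ≤ m + 3 := by omega
      have hprev := ih (m + 2) (by omega) (by omega) (by omega)
      rw [hreck n (m + 3) h3 hkn]
      have e1 : m + 3 - 1 = m + 2 := rfl
      have e2 : m + 3 - 2 = m + 1 := rfl
      have e3 : m + 2 - 1 = m + 1 := rfl
      have e4 : m + 2 - 2 = m := rfl
      rw [e1, e2]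
      rw [e3, e4] at hprev
      have hsplit1 : ∑ i ∈ Finset.Icc (m + 2) (n - 1), h (n - 1) i
          = h (n - 1) (m + 2) + ∑ i ∈ Finset.Icc (m + 3) (n - 1), h (n - 1) i :=
        sum_Icc_split_bot _ _ _ (by omega)
      have hsplit2 : ∑ i ∈ Finset.Icc 1 (m + 1), h (n - 1) i
          = ∑ i ∈ Finset.Icc 1 m, h (n - 1) i + h (n - 1) (m + 1) := by
        rw [Finset.sum_Icc_succ_top (by omega)]
      linarith [hprev, hsplit1, hsplit2]
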